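/- Let R = k[x,y] and let I ⊆ R be a graded ideal with Hilbert function T = H(R/I) satisfying lim_{i→∞} T_i = c > 0. Then I = f·I′ where f is a homogeneous form of degree c (the GCD of I) and I′ is a graded ideal with R/I′ Artinian of Hilbert function (T:c)_i = T_{i+c} − c. -/

import Mathlib

open MvPolynomial Submodule Finset

variable {k : Type*} [Field k]

noncomputable abbrev Rh (k : Type*) [Field k] (i : ℕ) :
    Submodule k (MvPolynomial (Fin 2) k) :=
  MvPolynomial.homogeneousSubmodule (Fin 2) k i

noncomputable def HF (I : Ideal (MvPolynomial (Fin 2) k)) (i : ℕ) : ℤ :=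
  (Module.finrank k (Rh k i) : ℤ) -
    (Module.finrank k (I.restrictScalars k ⊓ Rh k i : Submodule k (MvPolynomial (Fin 2) k)) : ℤ)

namespace HilbertAux

noncomputable def psi : MvPolynomial (Fin 2) k →+* Polynomial (MvPolynomial (Fin 2) k) :=
  MvPolynomial.eval₂Hom (Polynomial.C.comp MvPolynomial.C)
    (fun i => Polynomial.C (MvPolynomial.X i) * Polynomial.X)

example : UniqueFactorizationMonoid (MvPolynomial (Fin 2) k) := inferInstance
example : IsNoetherianRing (MvPolynomial (Fin 2) k) := inferInstance
example : IsDomain (MvPolynomial (Fin 2) k) := inferInstance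

lemma psi_monomial (d : Fin 2 →₀ ℕ) (r : k) :
    psi (MvPolynomial.monomial d r) =
      Polynomial.C (MvPolynomial.monomial d r) * Polynomial.X ^ (d.sum fun _ e => e) := by
  simp only [psi, MvPolynomial.eval₂Hom_monomial, RingHom.coe_comp, Function.comp_apply]
  rw [MvPolynomial.monomial_eq]
  rw [Finsupp.prod, Finsupp.prod, Finsupp.sum]
  simp only [mul_pow, ← Polynomial.C_pow]
  rw [Finset.prod_mul_distrib, ← map_prod, Finset.prod_pow_eq_pow_sum, map_mul]
  ring

lemma psi_coeff (p : MvPolynomial (Fin 2) k) (j : ℕ) :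
    (psi p).coeff j = MvPolynomial.homogeneousComponent j p := by
  induction p using MvPolynomial.induction_on' with
  | monomial d r =>
      rw [psi_monomial, MvPolynomial.homogeneousComponent_of_mem
        ((MvPolynomial.mem_homogeneousSubmodule _ _).2
          (MvPolynomial.isHomogeneous_monomial _ rfl))]
      simp [Polynomial.coeff_X_pow, Finsupp.degree_apply, Finsupp.sum, eq_comm]
      rfl
  | add p q hp hq => simp [map_add, hp, hq]


lemma psi_ne_zero {p : MvPolynomial (Fin 2) k} (hp : p ≠ 0) : psi p ≠ 0 := by
  intro h
  apply hp
  have := MvPolynomial.sum_homogeneousComponent (φ := p)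
  rw [← this]
  refine Finset.sum_eq_zero fun i _ => ?_
  rw [← psi_coeff, h, Polynomial.coeff_zero]

lemma homog_of_single {p : MvPolynomial (Fin 2) k} (hp : p ≠ 0)
    (h : (psi p).natTrailingDegree = (psi p).natDegree) :
    p ∈ Rh k (psi p).natDegree := by
  set a := (psi p).natDegree with ha
  have hz : ∀ i, i ≠ a → MvPolynomial.homogeneousComponent i p = 0 := by
    intro i hi
    rw [← psi_coeff]
    rcases lt_or_gt_of_ne hi with h1 | h1
    · exact Polynomial.coeff_eq_zero_of_lt_natTrailingDegree (by omega)
    · exact Polynomial.coeff_eq_zero_of_natDegree_lt h1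
  have hpa : p = MvPolynomial.homogeneousComponent a p := by
    have hs := MvPolynomial.sum_homogeneousComponent (φ := p)
    by_cases hmem : a ∈ Finset.range (p.totalDegree + 1)
    · conv_lhs => rw [← hs]
      exact Finset.sum_eq_single a (fun b _ hb => hz b hb) (fun h => absurd hmem h)
    · exfalso
      apply hp
      rw [← hs]
      refine Finset.sum_eq_zero fun i hi => hz i ?_
      rintro rfl; exact hmem hi
  rw [hpa]
  exact MvPolynomial.homogeneousComponent_mem _ _

lemma homog_factor {p q : MvPolynomial (Fin 2) k} {m : ℕ} (h0 : p * q ≠ 0)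
    (h : p * q ∈ Rh k m) : ∃ a b, a + b = m ∧ p ∈ Rh k a ∧ q ∈ Rh k b := by
  have hp : p ≠ 0 := fun h => h0 (by simp [h])
  have hq : q ≠ 0 := fun h => h0 (by simp [h])
  have hψ : psi (p * q) = Polynomial.C (p * q) * Polynomial.X ^ m := by
    refine Polynomial.ext fun j => ?_
    rw [psi_coeff, MvPolynomial.homogeneousComponent_of_mem h, Polynomial.coeff_C_mul,
      Polynomial.coeff_X_pow]
    by_cases hj : j = m <;> simp [hj, Ne.symm]
  have hψp := psi_ne_zero hp
  have hψq := psi_ne_zero hq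
  have hnd : (psi p).natDegree + (psi q).natDegree = m := by
    have := Polynomial.natDegree_mul hψp hψq
    rw [← map_mul, hψ] at this
    rw [← this, Polynomial.natDegree_C_mul_X_pow m _ h0]
  have hnt : (psi p).natTrailingDegree + (psi q).natTrailingDegree = m := by
    have := Polynomial.natTrailingDegree_mul hψp hψq
    rw [← map_mul, hψ, Polynomial.C_mul_X_pow_eq_monomial,
      Polynomial.natTrailingDegree_monomial h0] at this
    omega
  have h1 := Polynomial.natTrailingDegree_le_natDegree (p := psi p)
  have h2 := Polynomial.natTrailingDegree_le_natDegree (p := psi q)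
  have e1 : (psi p).natTrailingDegree = (psi p).natDegree := by omega
  have e2 : (psi q).natTrailingDegree = (psi q).natDegree := by omega
  exact ⟨_, _, hnd, homog_of_single hp e1, homog_of_single hq e2⟩

lemma hc_mul {f : MvPolynomial (Fin 2) k} {d : ℕ} (hf : f ∈ Rh k d)
    (g : MvPolynomial (Fin 2) k) (n : ℕ) :
    MvPolynomial.homogeneousComponent (d + n) (f * g) =
      f * MvPolynomial.homogeneousComponent n g := by
  induction g using MvPolynomial.induction_on' with
  | monomial e r =>
      have hm : (MvPolynomial.monomial e) r ∈ Rh k (Finsupp.degree e) :=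
        (MvPolynomial.mem_homogeneousSubmodule _ _).2
          (MvPolynomial.isHomogeneous_monomial _ rfl)
      have hfm : f * (MvPolynomial.monomial e) r ∈ Rh k (d + Finsupp.degree e) :=
        (MvPolynomial.mem_homogeneousSubmodule _ _).2
          (((MvPolynomial.mem_homogeneousSubmodule _ _).1 hf).mul
            ((MvPolynomial.mem_homogeneousSubmodule _ _).1 hm))
      rw [MvPolynomial.homogeneousComponent_of_mem hfm,
        MvPolynomial.homogeneousComponent_of_mem hm]
      split_ifs with h1 h2 h2
      · rfl
      · omega
      · omega
      · rw [mul_zero]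
  | add p q hp hq => rw [mul_add, map_add, map_add, hp, hq, mul_add]

lemma homog_cancel {f g : MvPolynomial (Fin 2) k} {d m : ℕ} (hf : f ∈ Rh k d) (hf0 : f ≠ 0)
    (hm : f * g ∈ Rh k m) (hd : d ≤ m) : g ∈ Rh k (m - d) := by
  have h1 : MvPolynomial.homogeneousComponent (d + (m - d)) (f * g) =
      f * MvPolynomial.homogeneousComponent (m - d) g := hc_mul hf g (m - d)
  rw [show d + (m - d) = m by omega, MvPolynomial.homogeneousComponent_of_mem hm,
    if_pos rfl] at h1
  have h2 : g = MvPolynomial.homogeneousComponent (m - d) g := mul_left_cancel₀ hf0 h1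
  rw [h2]
  exact MvPolynomial.homogeneousComponent_mem _ _


lemma degree_two (d : Fin 2 →₀ ℕ) : Finsupp.degree d = d 0 + d 1 := by
  rw [Finsupp.degree_apply, Finset.sum_subset (Finset.subset_univ d.support)]
  · rw [Fin.sum_univ_two]
  · intro x _ hx
    simpa using Finsupp.notMem_support_iff.1 hx

/-- The set of exponent vectors for `Fin 2` of total degree `n`. -/
noncomputable def degSetEquiv (n : ℕ) : { d : Fin 2 →₀ ℕ // Finsupp.degree d = n } ≃ Fin (n + 1) where
  toFun d := ⟨d.1 0, by have h := d.2; rw [degree_two] at h; omega⟩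
  invFun j := ⟨Finsupp.single 0 (j : ℕ) + Finsupp.single 1 (n - (j : ℕ)), by
    rw [degree_two]
    simp [Finsupp.single_apply]
    omega⟩
  left_inv d := by
    obtain ⟨d, hd⟩ := d
    rw [degree_two] at hd
    ext i
    fin_cases i <;> simp [Finsupp.single_apply] <;> omega
  right_inv j := by
    ext
    simp [Finsupp.single_apply]

noncomputable instance degSetFintype (n : ℕ) :
    Fintype { d : Fin 2 →₀ ℕ // Finsupp.degree d = n } :=
  Fintype.ofEquiv _ (degSetEquiv n).symm

/-- `Rh k n` is linearly equivalent to finitely supported functions on degree-`n` monomials. -/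
noncomputable def RhEquiv (n : ℕ) :
    (Rh k n) ≃ₗ[k] ({ d : Fin 2 →₀ ℕ // Finsupp.degree d = n } →₀ k) :=
  (LinearEquiv.ofEq _ _
      (MvPolynomial.homogeneousSubmodule_eq_finsupp_supported (Fin 2) k n)).trans
    (AddMonoidAlgebra.supportedEquivFinsupp _)

instance fd_Rh (n : ℕ) : FiniteDimensional k (Rh k n) :=
  Module.Finite.equiv (RhEquiv n).symm

lemma finrank_Rh (n : ℕ) : Module.finrank k (Rh k n) = n + 1 := by
  rw [(RhEquiv (k := k) n).finrank_eq, Module.finrank_finsupp_self, Fintype.card_congr (degSetEquiv n),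
    Fintype.card_fin]


/-- Multiples of `u` by homogeneous polynomials of degree `i`. -/
noncomputable def Mq (u : MvPolynomial (Fin 2) k) (i : ℕ) :
    Submodule k (MvPolynomial (Fin 2) k) :=
  Submodule.map (LinearMap.mulLeft k u) (Rh k i)

lemma mem_Mq {u v : MvPolynomial (Fin 2) k} {i : ℕ} :
    v ∈ Mq u i ↔ ∃ r, r ∈ Rh k i ∧ u * r = v := by
  simp [Mq, Submodule.mem_map, LinearMap.mulLeft_apply]

lemma Mq_le_Rh {u : MvPolynomial (Fin 2) k} {d : ℕ} (hu : u ∈ Rh k d) (i : ℕ) :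
    Mq u i ≤ Rh k (d + i) := by
  rintro v hv
  obtain ⟨r, hr, rfl⟩ := mem_Mq.1 hv
  exact (MvPolynomial.mem_homogeneousSubmodule _ _).2
    (((MvPolynomial.mem_homogeneousSubmodule _ _).1 hu).mul
      ((MvPolynomial.mem_homogeneousSubmodule _ _).1 hr))

lemma Mq_le_ideal {u : MvPolynomial (Fin 2) k} {J : Ideal (MvPolynomial (Fin 2) k)}
    (hu : u ∈ J) (i : ℕ) : Mq u i ≤ J.restrictScalars k := by
  rintro v hv
  obtain ⟨r, hr, rfl⟩ := mem_Mq.1 hv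
  exact Ideal.mul_mem_right r J hu

instance fd_Mq (u : MvPolynomial (Fin 2) k) (i : ℕ) : FiniteDimensional k (Mq u i) :=
  Module.Finite.map _ _

lemma finrank_Mq {u : MvPolynomial (Fin 2) k} (hu : u ≠ 0) (i : ℕ) :
    Module.finrank k (Mq u i) = i + 1 := by
  have hinj : Function.Injective (LinearMap.mulLeft k u) := by
    intro a b hab
    simp only [LinearMap.mulLeft_apply] at hab
    exact mul_left_cancel₀ hu hab
  rw [Mq, ← (Submodule.equivMapOfInjective _ hinj (Rh k i)).finrank_eq, finrank_Rh]

lemma Mq_inf {p h : MvPolynomial (Fin 2) k} {b e : ℕ} (hp : Prime p) (hpb : p ∈ Rh k b)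
    (hh : h ∈ Rh k e) (hh0 : h ≠ 0) (hph : ¬ p ∣ h) (j : ℕ) :
    Mq p (e + j) ⊓ Mq h (b + j) = Mq (p * h) j := by
  apply le_antisymm
  · rintro v ⟨hv1, hv2⟩
    obtain ⟨r, hr, hrv⟩ := mem_Mq.1 hv1
    obtain ⟨t, ht, htv⟩ := mem_Mq.1 hv2
    have hdvd : p ∣ h * t := ⟨r, by rw [htv, hrv]⟩
    obtain ⟨w, rfl⟩ := (hp.dvd_mul.1 hdvd).resolve_left hph
    have hrw : r = h * w := by
      apply mul_left_cancel₀ hp.ne_zero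
      rw [hrv, ← htv]; ring
    have hw : w ∈ Rh k j := by
      have := homog_cancel hh hh0 (by rw [← hrw]; exact hr) (Nat.le_add_right e j)
      rwa [Nat.add_sub_cancel_left] at this
    exact mem_Mq.2 ⟨w, hw, by rw [← htv]; ring⟩
  · rintro v hv
    obtain ⟨w, hw, rfl⟩ := mem_Mq.1 hv
    constructor
    · refine mem_Mq.2 ⟨h * w, ?_, by ring⟩
      exact (MvPolynomial.mem_homogeneousSubmodule _ _).2
        (((MvPolynomial.mem_homogeneousSubmodule _ _).1 hh).mul
          ((MvPolynomial.mem_homogeneousSubmodule _ _).1 hw))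
    · refine mem_Mq.2 ⟨p * w, ?_, by ring⟩
      exact (MvPolynomial.mem_homogeneousSubmodule _ _).2
        (((MvPolynomial.mem_homogeneousSubmodule _ _).1 hpb).mul
          ((MvPolynomial.mem_homogeneousSubmodule _ _).1 hw))

lemma Mq_sup {p h : MvPolynomial (Fin 2) k} {b e : ℕ} (hp : Prime p) (hpb : p ∈ Rh k b)
    (hh : h ∈ Rh k e) (hh0 : h ≠ 0) (hph : ¬ p ∣ h) (j : ℕ) :
    Mq p (e + j) ⊔ Mq h (b + j) = Rh k (b + e + j) := by
  have hle : Mq p (e + j) ⊔ Mq h (b + j) ≤ Rh k (b + e + j) := by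
    apply sup_le
    · have := Mq_le_Rh hpb (e + j)
      rwa [show b + (e + j) = b + e + j by ring] at this
    · have := Mq_le_Rh hh (b + j)
      rwa [show e + (b + j) = b + e + j by ring] at this
  have hfr := Submodule.finrank_sup_add_finrank_inf_eq (Mq p (e + j)) (Mq h (b + j))
  rw [Mq_inf hp hpb hh hh0 hph j, finrank_Mq hp.ne_zero, finrank_Mq hh0,
    finrank_Mq (mul_ne_zero hp.ne_zero hh0)] at hfr
  apply Submodule.eq_of_le_of_finrank_le hle
  rw [finrank_Rh]
  omega

lemma core (g : MvPolynomial (Fin 2) k) : g ≠ 0 →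
    ∀ (J : Ideal (MvPolynomial (Fin 2) k)),
    (∀ u ∈ J, ∀ n, MvPolynomial.homogeneousComponent n u ∈ J) →
    g ∈ J → (∃ dg, g ∈ Rh k dg) →
    (∀ p : MvPolynomial (Fin 2) k, Prime p → p ∣ g →
      ∃ h dh, h ∈ J ∧ h ∈ Rh k dh ∧ ¬ p ∣ h) →
    ∃ N, ∀ i, N ≤ i → Rh k i ≤ J.restrictScalars k := by
  induction g using UniqueFactorizationMonoid.induction_on_prime with
  | h₁ => exact fun h => absurd rfl h
  | h₂ x hx =>
      intro _ J _ hxJ _ _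
      have : J = ⊤ := Ideal.eq_top_of_isUnit_mem J hxJ hx
      exact ⟨0, fun i _ => by simp [this]⟩
  | h₃ a p ha0 hp IH =>
      intro hpa0 J hJ hgJ hghom hwit
      obtain ⟨dg, hdg⟩ := hghom
      obtain ⟨b, a', hba, hpb, haa'⟩ := homog_factor hpa0 hdg
      -- the colon ideal (J : p)
      set J₁ : Ideal (MvPolynomial (Fin 2) k) :=
        Submodule.comap (LinearMap.mulLeft (MvPolynomial (Fin 2) k) p) J with hJ₁def
      have mem_J₁ : ∀ v, v ∈ J₁ ↔ p * v ∈ J := fun v => Iff.rfl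
      have hJ₁graded : ∀ u ∈ J₁, ∀ n, MvPolynomial.homogeneousComponent n u ∈ J₁ := by
        intro u hu n
        rw [mem_J₁, ← hc_mul hpb u n]
        exact hJ _ ((mem_J₁ u).1 hu) _
      have haJ₁ : a ∈ J₁ := by rw [mem_J₁]; exact hgJ
      have hwit₁ : ∀ q : MvPolynomial (Fin 2) k, Prime q → q ∣ a →
          ∃ h dh, h ∈ J₁ ∧ h ∈ Rh k dh ∧ ¬ q ∣ h := by
        intro q hq hqa
        obtain ⟨h, dh, hhJ, hhR, hqh⟩ := hwit q hq (hqa.mul_left p)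
        exact ⟨h, dh, (mem_J₁ h).2 (Ideal.mul_mem_left J p hhJ), hhR, hqh⟩
      obtain ⟨N₁, hN₁⟩ := IH ha0 J₁ hJ₁graded haJ₁ ⟨a', haa'⟩ hwit₁
      obtain ⟨h, e', hhJ, hhR, hph⟩ := hwit p hp (dvd_mul_right p a)
      have hh0 : h ≠ 0 := fun h0 => hph (h0 ▸ dvd_zero p)
      refine ⟨N₁ + b + e', fun i hi => ?_⟩
      have hij : i = b + e' + (i - b - e') := by omega
      rw [hij, ← Mq_sup hp hpb hhR hh0 hph (i - b - e')]
      apply sup_le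
      · rintro v hv
        obtain ⟨r, hr, rfl⟩ := mem_Mq.1 hv
        have hrJ₁ : r ∈ J₁ := hN₁ (e' + (i - b - e')) (by omega) hr
        exact (mem_J₁ r).1 hrJ₁
      · exact Mq_le_ideal hhJ _


lemma HF_eq (J : Ideal (MvPolynomial (Fin 2) k)) (i : ℕ) :
    HF J i = (i + 1 : ℤ) -
      (Module.finrank k (J.restrictScalars k ⊓ Rh k i :
        Submodule k (MvPolynomial (Fin 2) k)) : ℤ) := by
  rw [HF, finrank_Rh]
  push_cast
  ring

end HilbertAux

open HilbertAux

/-- A graded ideal `I ⊆ k[x,y]` whose Hilbert function `T = H(R/I)` is eventually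
the constant `c > 0` factors as `I = f·I′` with `f` a form of degree `c` (the GCD
of `I`) and `I′` graded with `R/I′` Artinian of Hilbert function
`(T:c)_i = T_{i+c} − c`. -/
theorem common_factor_of_constant_hilbert (I : Ideal (MvPolynomial (Fin 2) k))
    (hI : ∀ f ∈ I, ∀ n, MvPolynomial.homogeneousComponent n f ∈ I)
    (c s : ℕ) (hc : 0 < c) (hs : ∀ i, s ≤ i → HF I i = (c : ℤ)) :
    ∃ f ∈ Rh k c, ∃ I' : Ideal (MvPolynomial (Fin 2) k),
      (∀ g ∈ I', ∀ n, MvPolynomial.homogeneousComponent n g ∈ I') ∧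
      (I : Set (MvPolynomial (Fin 2) k)) = (fun g => f * g) '' (I' : Set (MvPolynomial (Fin 2) k)) ∧
      (∀ i : ℕ, HF I' i = HF I (i + c) - c) ∧
      (∃ n : ℕ, ∀ i, n ≤ i → HF I' i = 0) := by
  classical
  letI : NormalizationMonoid (MvPolynomial (Fin 2) k) :=
    UniqueFactorizationMonoid.normalizationMonoid.toNormalizationMonoid
  letI : NormalizedGCDMonoid (MvPolynomial (Fin 2) k) :=
    UniqueFactorizationMonoid.toNormalizedGCDMonoid _
  -- I is nonzero
  have hI0 : I ≠ ⊥ := by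
    intro hbot
    have h1 := hs (max s c) (le_max_left _ _)
    rw [HF_eq, hbot] at h1
    rw [show ((⊥ : Ideal (MvPolynomial (Fin 2) k)).restrictScalars k ⊓ Rh k (max s c)) = ⊥ by
      simp] at h1
    rw [finrank_bot] at h1
    have h2 := le_max_right s c
    push_cast at h1
    omega
  -- homogeneous generators
  obtain ⟨G, hG⟩ : I.FG := IsNoetherian.noetherian I
  set t : Finset (MvPolynomial (Fin 2) k) :=
    G.biUnion fun g => (Finset.range (g.totalDegree + 1)).image
      fun n => MvPolynomial.homogeneousComponent n g with ht_def
  have ht_sub : ∀ x ∈ t, x ∈ I := by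
    intro x hx
    simp only [ht_def, Finset.mem_biUnion, Finset.mem_image, Finset.mem_range] at hx
    obtain ⟨g, hg, n, -, rfl⟩ := hx
    exact hI g (hG ▸ Ideal.subset_span hg) n
  have ht_hom : ∀ x ∈ t, ∃ n, x ∈ Rh k n := by
    intro x hx
    simp only [ht_def, Finset.mem_biUnion, Finset.mem_image, Finset.mem_range] at hx
    obtain ⟨g, hg, n, -, rfl⟩ := hx
    exact ⟨n, MvPolynomial.homogeneousComponent_mem _ _⟩
  have ht_span : Ideal.span (t : Set (MvPolynomial (Fin 2) k)) = I := by
    apply le_antisymm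
    · rw [Ideal.span_le]
      exact ht_sub
    · rw [← hG]
      rw [Ideal.span_le]
      intro g hg
      have : g = ∑ n ∈ Finset.range (g.totalDegree + 1),
          MvPolynomial.homogeneousComponent n g :=
        (MvPolynomial.sum_homogeneousComponent g).symm
      rw [this]
      apply Submodule.sum_mem
      intro n hn
      apply Ideal.subset_span
      simp only [ht_def, Finset.coe_biUnion, Set.mem_iUnion, Finset.coe_image, Set.mem_image]
      exact ⟨g, hg, Set.mem_image_of_mem _ (Finset.mem_coe.2 hn)⟩
    -- gcd
  set f : MvPolynomial (Fin 2) k := t.gcd id with hf_def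
  have hfdvd : ∀ x ∈ I, f ∣ x := by
    have hle : I ≤ Ideal.span {f} := by
      rw [← ht_span, Ideal.span_le]
      intro x hx
      exact Ideal.mem_span_singleton.2 (Finset.gcd_dvd hx)
    exact fun x hx => Ideal.mem_span_singleton.1 (hle hx)
  have hf0 : f ≠ 0 := by
    intro h0
    apply hI0
    rw [← ht_span]
    rw [Ideal.span_eq_bot]
    intro x hx
    exact (Finset.gcd_eq_zero_iff.1 h0) x hx
  obtain ⟨x0, hx0t, hx00⟩ : ∃ x0 ∈ t, x0 ≠ 0 := by
    by_contra hall
    push_neg at hall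
    exact hf0 (Finset.gcd_eq_zero_iff.2 fun x hx => by simpa using hall x hx)
  obtain ⟨q0, hq0⟩ := hfdvd x0 (ht_sub x0 hx0t)
  obtain ⟨n0, hx0R⟩ := ht_hom x0 hx0t
  have hfq0 : f * q0 ≠ 0 := hq0 ▸ hx00
  obtain ⟨d, b0, hdb0, hfR, hq0R⟩ := homog_factor hfq0 (hq0 ▸ hx0R)
  -- the quotient ideal
  set I' : Ideal (MvPolynomial (Fin 2) k) :=
    Submodule.comap (LinearMap.mulLeft (MvPolynomial (Fin 2) k) f) I with hI'def
  have mem_I' : ∀ v, v ∈ I' ↔ f * v ∈ I := fun v => Iff.rfl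
  have hI'graded : ∀ g ∈ I', ∀ n, MvPolynomial.homogeneousComponent n g ∈ I' := by
    intro g hg n
    rw [mem_I', ← hc_mul hfR g n]
    exact hI _ ((mem_I' g).1 hg) _
  have hset : (I : Set (MvPolynomial (Fin 2) k)) =
      (fun g => f * g) '' (I' : Set (MvPolynomial (Fin 2) k)) := by
    ext x
    constructor
    · intro hx
      obtain ⟨q, hq⟩ := hfdvd x hx
      refine ⟨q, ?_, hq.symm⟩
      show f * q ∈ I
      rw [← hq]; exact hx
    · rintro ⟨q, hq, rfl⟩
      exact hq
  -- Hilbert function relation, with d in place of c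
  have hHF : ∀ i : ℕ, HF I' i = HF I (i + d) - d := by
    intro i
    have hinj : Function.Injective (LinearMap.mulLeft k f) := by
      intro a b hab
      simp only [LinearMap.mulLeft_apply] at hab
      exact mul_left_cancel₀ hf0 hab
    have hmap : Submodule.map (LinearMap.mulLeft k f)
        (I'.restrictScalars k ⊓ Rh k i) = I.restrictScalars k ⊓ Rh k (i + d) := by
      apply le_antisymm
      · rintro v ⟨u, ⟨hu1, hu2⟩, rfl⟩
        simp only [LinearMap.mulLeft_apply]
        constructor
        · exact (mem_I' u).1 hu1
        · have := (MvPolynomial.mem_homogeneousSubmodule _ _).2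
            (((MvPolynomial.mem_homogeneousSubmodule _ _).1 hfR).mul
              ((MvPolynomial.mem_homogeneousSubmodule _ _).1 hu2))
          rwa [show d + i = i + d by ring] at this
      · rintro x ⟨hx1, hx2⟩
        obtain ⟨q, hq⟩ := hfdvd x hx1
        refine ⟨q, ⟨?_, ?_⟩, ?_⟩
        · show f * q ∈ I
          rw [← hq]; exact hx1
        · have : f * q ∈ Rh k (i + d) := by rw [← hq]; exact hx2
          have h2 := homog_cancel hfR hf0 this (by omega)
          rwa [show i + d - d = i by omega] at h2
        · simp only [LinearMap.mulLeft_apply]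
          exact hq.symm
    have hfr : Module.finrank k (I'.restrictScalars k ⊓ Rh k i :
          Submodule k (MvPolynomial (Fin 2) k)) =
        Module.finrank k (I.restrictScalars k ⊓ Rh k (i + d) :
          Submodule k (MvPolynomial (Fin 2) k)) := by
      rw [← hmap]
      exact (Submodule.equivMapOfInjective _ hinj _).finrank_eq
    rw [HF_eq, HF_eq, hfr]
    push_cast
    ring
  -- eventual vanishing of HF I'
  have hq0I' : q0 ∈ I' := by
    rw [mem_I', ← hq0]
    exact ht_sub x0 hx0t
  have hq00 : q0 ≠ 0 := by
    intro h0
    exact hfq0 (by rw [h0, mul_zero])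
  obtain ⟨N, hN⟩ := core q0 hq00 I' hI'graded hq0I' ⟨b0, hq0R⟩ (by
    intro p hp hpq0
    by_cases hwit : ∃ y ∈ t, ¬ f * p ∣ y
    · obtain ⟨y, hyt, hfpy⟩ := hwit
      obtain ⟨qy, hqy⟩ := hfdvd y (ht_sub y hyt)
      have hy0 : y ≠ 0 := by
        intro h0
        exact hfpy (h0 ▸ dvd_zero _)
      obtain ⟨ny, hyR⟩ := ht_hom y hyt
      obtain ⟨ay, by', -, -, hqyR⟩ := homog_factor (hqy ▸ hy0) (hqy ▸ hyR)
      refine ⟨qy, by', ?_, hqyR, ?_⟩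
      · rw [mem_I', ← hqy]
        exact ht_sub y hyt
      · intro hdvd
        exact hfpy (hqy ▸ mul_dvd_mul_left f hdvd)
    · exfalso
      push_neg at hwit
      have : f * p ∣ f := Finset.dvd_gcd fun y hy => hwit y hy
      have hp1 : p ∣ 1 := (mul_dvd_mul_iff_left hf0).1 (by simpa using this)
      exact hp.not_unit (isUnit_of_dvd_one hp1))
  have hvanish : ∀ i, N ≤ i → HF I' i = 0 := by
    intro i hi
    rw [HF_eq]
    rw [inf_eq_right.2 (hN i hi)]
    rw [finrank_Rh]
    push_cast
    ring
  -- d = c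
  have hdc : d = c := by
    have h1 := hvanish (max N s) (le_max_left _ _)
    have h2 := hHF (max N s)
    have h3 := hs (max N s + d) (by have := le_max_right N s; omega)
    rw [h1, h3] at h2
    omega
  subst hdc
  exact ⟨f, hfR, I', hI'graded, hset, hHF, ⟨N, hvanish⟩⟩
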